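/- Let κ ≥ 1 be a real number, f the filter function associated to κ, and let A be an N×N positive semidefinite complex matrix with ‖A‖ ≤ 1 (so all eigenvalues lie in [0,1]), with spectral decomposition A = Σ_j λ_j |u_j⟩⟨u_j| (λ_j the eigenvalues, {u_j} an orthonormal eigenbasis). Then the operator norm of Σ_j λ_j f(λ_j)² |u_j⟩⟨u_j| − (1/(4√κ))·√A is at most 1/(4κ), where √A denotes the positive semidefinite square root of A. -/

import Mathlib

open Real Matrix
open scoped Matrix.Norms.L2Operator ComplexOrder

/-- The square root of a positive semidefinite matrix (removed from Mathlib; old definition). -/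
noncomputable def Matrix.PosSemidef.sqrt {n 𝕜 : Type*} [Fintype n] [DecidableEq n] [RCLike 𝕜]
    {A : Matrix n n 𝕜} (hA : A.PosSemidef) : Matrix n n 𝕜 :=
  (hA.1.eigenvectorUnitary : Matrix n n 𝕜) * diagonal ((↑) ∘ (√·) ∘ hA.1.eigenvalues) *
    (star (hA.1.eigenvectorUnitary : Matrix n n 𝕜))

/-- The filter function associated to the parameter `κ`. -/
noncomputable def filterFun (κ : ℝ) : ℝ → ℝ := fun l =>
  if 1 < l then (1/2) * κ ^ (-(1/4 : ℝ))
  else if 1/κ ≤ l then (1/2) * κ ^ (-(1/4 : ℝ)) * l ^ (-(1/4 : ℝ))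
  else if 1/(2*κ) ≤ l then (1/2) * Real.sin ((π/2) * ((l - 1/(2*κ)) / (1/κ - 1/(2*κ))))
  else 0

lemma diag_norm_le {n : Type*} [Fintype n] [DecidableEq n] (v : n → ℂ) {c : ℝ}
    (hc : 0 ≤ c) (h : ∀ i, ‖v i‖ ≤ c) : ‖Matrix.diagonal v‖ ≤ c := by
  rw [Matrix.l2_opNorm_def]
  refine ContinuousLinearMap.opNorm_le_bound _ hc fun x => ?_
  rw [EuclideanSpace.norm_eq, EuclideanSpace.norm_eq]
  rw [← Real.sqrt_sq hc, ← Real.sqrt_mul (sq_nonneg c)]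
  apply Real.sqrt_le_sqrt
  rw [Finset.mul_sum]
  apply Finset.sum_le_sum
  intro i _
  have : ((LinearEquiv.trans Matrix.toEuclideanLin LinearMap.toContinuousLinearMap)
      (Matrix.diagonal v) x) i = v i * x i := by
    simp [Matrix.toEuclideanLin_apply, Matrix.mulVec_diagonal]
  rw [this, norm_mul, mul_pow]
  exact mul_le_mul_of_nonneg_right (pow_le_pow_left₀ (norm_nonneg _) (h i) 2) (sq_nonneg _)

lemma scalar_bound {κ l : ℝ} (hκ : 1 ≤ κ) (hl0 : 0 ≤ l) (hl1 : l ≤ 1) :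
    |l * (filterFun κ l)^2 - 1 / (4 * Real.sqrt κ) * Real.sqrt l| ≤ 1/(4*κ) := by
  have hκ0 : (0:ℝ) < κ := lt_of_lt_of_le one_pos hκ
  have hsκ : 0 < Real.sqrt κ := Real.sqrt_pos.2 hκ0
  have hκκ : Real.sqrt κ * Real.sqrt κ = κ := Real.mul_self_sqrt hκ0.le
  by_cases h2 : 1/κ ≤ l
  · have hl0' : (0:ℝ) < l := lt_of_lt_of_le (by positivity) h2
    have hsl : 0 < Real.sqrt l := Real.sqrt_pos.2 hl0'
    have hll : Real.sqrt l * Real.sqrt l = l := Real.mul_self_sqrt hl0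
    have hf : filterFun κ l = (1/2) * κ ^ (-(1/4:ℝ)) * l ^ (-(1/4:ℝ)) := by
      unfold filterFun; rw [if_neg (not_lt.2 hl1), if_pos h2]
    have ea : (κ ^ (-(1/4:ℝ)))^2 = (Real.sqrt κ)⁻¹ := by
      rw [← Real.rpow_natCast (κ ^ (-(1/4:ℝ))) 2, ← Real.rpow_mul hκ0.le,
        Real.sqrt_eq_rpow, ← Real.rpow_neg_one (κ ^ (1/2:ℝ)), ← Real.rpow_mul hκ0.le]
      norm_num
    have eb : (l ^ (-(1/4:ℝ)))^2 = (Real.sqrt l)⁻¹ := by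
      rw [← Real.rpow_natCast (l ^ (-(1/4:ℝ))) 2, ← Real.rpow_mul hl0,
        Real.sqrt_eq_rpow, ← Real.rpow_neg_one (l ^ (1/2:ℝ)), ← Real.rpow_mul hl0]
      norm_num
    have key : l * (filterFun κ l)^2 = 1 / (4 * Real.sqrt κ) * Real.sqrt l := by
      rw [hf, mul_pow, mul_pow, ea, eb]
      field_simp
      nlinarith [hll]
    rw [key, sub_self, abs_zero]
    positivity
  · push_neg at h2
    have hfsq : (filterFun κ l)^2 ≤ 1/4 := by
      have h1 : ¬ (1 < l) := not_lt.2 hl1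
      unfold filterFun
      rw [if_neg h1, if_neg (not_le.2 h2)]
      split_ifs
      · nlinarith [Real.neg_one_le_sin ((π/2) * ((l - 1/(2*κ)) / (1/κ - 1/(2*κ)))),
          Real.sin_le_one ((π/2) * ((l - 1/(2*κ)) / (1/κ - 1/(2*κ))))]
      · norm_num
    have ha0 : 0 ≤ l * (filterFun κ l)^2 := mul_nonneg hl0 (sq_nonneg _)
    have ha1 : l * (filterFun κ l)^2 ≤ 1/(4*κ) := by
      calc l * (filterFun κ l)^2 ≤ l * (1/4) := by
            exact mul_le_mul_of_nonneg_left hfsq hl0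
        _ ≤ (1/κ) * (1/4) := by
            apply mul_le_mul_of_nonneg_right h2.le; norm_num
        _ = 1/(4*κ) := by field_simp
    have hb0 : 0 ≤ 1 / (4 * Real.sqrt κ) * Real.sqrt l := by positivity
    have hb1 : 1 / (4 * Real.sqrt κ) * Real.sqrt l ≤ 1/(4*κ) := by
      have h3 : Real.sqrt l ≤ Real.sqrt (1/κ) := Real.sqrt_le_sqrt h2.le
      have h4 : Real.sqrt (1/κ) = (Real.sqrt κ)⁻¹ := by
        rw [one_div, Real.sqrt_inv]
      calc 1 / (4 * Real.sqrt κ) * Real.sqrt l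
          ≤ 1 / (4 * Real.sqrt κ) * (Real.sqrt κ)⁻¹ := by
            apply mul_le_mul_of_nonneg_left (h4 ▸ h3); positivity
        _ = 1/(4*κ) := by field_simp; nlinarith [hκκ]
    rw [abs_sub_le_iff]
    constructor <;> linarith

theorem stmt1 {N : ℕ} (κ : ℝ) (hκ : 1 ≤ κ)
    (A : Matrix (Fin N) (Fin N) ℂ) (hA : A.PosSemidef) (hAnorm : ‖A‖ ≤ 1) :
    ‖(hA.1.eigenvectorUnitary : Matrix (Fin N) (Fin N) ℂ) *
        Matrix.diagonal (fun j =>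
          ((hA.1.eigenvalues j * (filterFun κ (hA.1.eigenvalues j))^2 : ℝ) : ℂ)) *
        star (hA.1.eigenvectorUnitary : Matrix (Fin N) (Fin N) ℂ)
      - (1 / (4 * Real.sqrt κ) : ℝ) • hA.sqrt‖ ≤ 1 / (4*κ) := by
  have hκ0 : (0:ℝ) < κ := lt_of_lt_of_le one_pos hκ
  set U : Matrix (Fin N) (Fin N) ℂ := (hA.1.eigenvectorUnitary : Matrix (Fin N) (Fin N) ℂ) with hU
  -- eigenvalue bounds
  have hev0 : ∀ j, 0 ≤ hA.1.eigenvalues j := fun j => hA.eigenvalues_nonneg j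
  have hev1 : ∀ j, hA.1.eigenvalues j ≤ 1 := by
    intro j
    set v : EuclideanSpace ℂ (Fin N) := hA.1.eigenvectorBasis j with hv
    have hv1 : ‖v‖ = 1 := hA.1.eigenvectorBasis.orthonormal.1 j
    have hm : A *ᵥ ⇑v = hA.1.eigenvalues j • ⇑v := hA.1.mulVec_eigenvectorBasis j
    have hle := Matrix.l2_opNorm_mulVec A v
    have heq : ((EuclideanSpace.equiv (Fin N) ℂ).symm (A *ᵥ v) : EuclideanSpace ℂ (Fin N))
        = hA.1.eigenvalues j • v := by
      rw [hm]; rfl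
    rw [heq, norm_smul, hv1, mul_one, Real.norm_eq_abs, mul_one] at hle
    exact le_trans (le_abs_self _) (le_trans hle hAnorm)
  -- the difference as a conjugated diagonal
  set g : Fin N → ℂ := fun j =>
    ((hA.1.eigenvalues j * (filterFun κ (hA.1.eigenvalues j))^2
      - 1 / (4 * Real.sqrt κ) * Real.sqrt (hA.1.eigenvalues j) : ℝ) : ℂ) with hg
  have hsqrt : hA.sqrt = U * Matrix.diagonal ((↑) ∘ Real.sqrt ∘ hA.1.eigenvalues) * star U := rfl
  have key : (U * Matrix.diagonal (fun j =>
          ((hA.1.eigenvalues j * (filterFun κ (hA.1.eigenvalues j))^2 : ℝ) : ℂ)) * star U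
      - (1 / (4 * Real.sqrt κ) : ℝ) • hA.sqrt) = U * Matrix.diagonal g * star U := by
    rw [hsqrt]
    have hdiag : Matrix.diagonal g = Matrix.diagonal (fun j =>
          ((hA.1.eigenvalues j * (filterFun κ (hA.1.eigenvalues j))^2 : ℝ) : ℂ))
        - (1 / (4 * Real.sqrt κ) : ℝ) • Matrix.diagonal ((↑) ∘ Real.sqrt ∘ hA.1.eigenvalues) := by
      ext j k
      simp only [Matrix.sub_apply, Matrix.smul_apply, Matrix.diagonal_apply,
        Function.comp_apply]
      split_ifs with h
      · simp only [hg, Complex.real_smul]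
        push_cast
        ring
      · simp
    rw [hdiag, Matrix.mul_sub, Matrix.sub_mul]
    congr 1
    rw [Matrix.mul_smul, Matrix.smul_mul]
  rw [key]
  -- norm bounds
  have hUs : star U * U = 1 := hA.1.eigenvectorUnitary.prop.1
  have hone : ‖(1 : Matrix (Fin N) (Fin N) ℂ)‖ ≤ 1 := by
    rw [← Matrix.diagonal_one]
    exact diag_norm_le _ zero_le_one (fun i => by simp)
  have hUn : ‖U‖ ≤ 1 := by
    have h1 : ‖Uᴴ * U‖ = ‖U‖ * ‖U‖ := Matrix.l2_opNorm_conjTranspose_mul_self U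
    rw [← Matrix.star_eq_conjTranspose, hUs] at h1
    nlinarith [norm_nonneg U, hone, h1]
  have hUstar : ‖star U‖ ≤ 1 := by
    rw [Matrix.star_eq_conjTranspose, Matrix.l2_opNorm_conjTranspose]
    exact hUn
  have hGn : ‖Matrix.diagonal g‖ ≤ 1/(4*κ) := by
    apply diag_norm_le _ (by positivity)
    intro j
    rw [hg]
    rw [Complex.norm_real]
    exact scalar_bound hκ (hev0 j) (hev1 j)
  calc ‖U * Matrix.diagonal g * star U‖
      ≤ ‖U * Matrix.diagonal g‖ * ‖star U‖ := Matrix.l2_opNorm_mul _ _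
    _ ≤ (‖U‖ * ‖Matrix.diagonal g‖) * ‖star U‖ :=
        mul_le_mul_of_nonneg_right (Matrix.l2_opNorm_mul _ _) (norm_nonneg _)
    _ ≤ (1 * (1/(4*κ))) * 1 := by
        have h4 : (0:ℝ) ≤ 1/(4*κ) := by positivity
        exact mul_le_mul (mul_le_mul hUn hGn (norm_nonneg _) zero_le_one) hUstar
          (norm_nonneg _) (by positivity)
    _ = 1/(4*κ) := by ring
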